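/- Let {a_n} and {s_n} be the (4,1)-recurrent sequences with a_0 = a_1 = 1, s_0 = 0, s_1 = 1. Then for all n ≥ 1, 2·Σ_{i=1}^{n} a_i·s_{n+1-i} = n·s_n + Σ_{i=1}^{n} a_i·a_{n+1-i}. -/

import Mathlib

def seqA : ℕ → ℤ
  | 0 => 1
  | 1 => 1
  | n + 2 => 4 * seqA (n + 1) - seqA n

def seqS : ℕ → ℤ
  | 0 => 0
  | 1 => 1
  | n + 2 => 4 * seqS (n + 1) - seqS n

open Finset

lemma seqA_key : ∀ m : ℕ, seqA (m + 1) = seqS (m + 1) - seqS m := by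
  intro m
  induction m using Nat.twoStepInduction with
  | zero => simp [seqA, seqS]
  | one => simp [seqA, seqS]
  | more n ih1 ih2 =>
    show seqA (n + 3) = seqS (n + 3) - seqS (n + 2)
    have hA : seqA (n + 3) = 4 * seqA (n + 2) - seqA (n + 1) := rfl
    have hS : seqS (n + 3) = 4 * seqS (n + 2) - seqS (n + 1) := rfl
    have hS2 : seqS (n + 2) = 4 * seqS (n + 1) - seqS n := rfl
    rw [hA, hS, ih1, ih2]
    linarith

lemma sum_recS (n : ℕ) :
    ∑ i ∈ Icc 1 (n + 2), seqA i * seqS (n + 3 - i)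
      = 4 * ∑ i ∈ Icc 1 (n + 1), seqA i * seqS (n + 2 - i)
        - ∑ i ∈ Icc 1 n, seqA i * seqS (n + 1 - i) + seqA (n + 2) := by
  rw [Finset.sum_Icc_succ_top (by omega : 1 ≤ n + 2),
      Finset.sum_Icc_succ_top (by omega : 1 ≤ n + 1),
      Finset.sum_Icc_succ_top (by omega : 1 ≤ n + 1)]
  have h1 : ∀ i ∈ Icc 1 n, seqA i * seqS (n + 3 - i)
      = 4 * (seqA i * seqS (n + 2 - i)) - seqA i * seqS (n + 1 - i) := by
    intro i hi
    simp only [mem_Icc] at hi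
    have e1 : n + 3 - i = (n + 1 - i) + 2 := by omega
    have e2 : n + 2 - i = (n + 1 - i) + 1 := by omega
    rw [e1, e2]
    have : seqS (n + 1 - i + 2) = 4 * seqS (n + 1 - i + 1) - seqS (n + 1 - i) := rfl
    rw [this]; ring
  rw [Finset.sum_congr rfl h1, Finset.sum_sub_distrib, ← Finset.mul_sum]
  have e3 : n + 3 - (n + 1) = 2 := by omega
  have e4 : n + 3 - (n + 2) = 1 := by omega
  have e5 : n + 2 - (n + 1) = 1 := by omega
  rw [e3, e4, e5]
  have hS2 : seqS 2 = 4 := rfl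
  have hS1 : seqS 1 = 1 := rfl
  rw [hS2, hS1]
  ring

lemma sum_recA (n : ℕ) :
    ∑ i ∈ Icc 1 (n + 2), seqA i * seqA (n + 3 - i)
      = 4 * ∑ i ∈ Icc 1 (n + 1), seqA i * seqA (n + 2 - i)
        - ∑ i ∈ Icc 1 n, seqA i * seqA (n + 1 - i) + seqA (n + 2) - seqA (n + 1) := by
  rw [Finset.sum_Icc_succ_top (by omega : 1 ≤ n + 2),
      Finset.sum_Icc_succ_top (by omega : 1 ≤ n + 1),
      Finset.sum_Icc_succ_top (by omega : 1 ≤ n + 1)]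
  have h1 : ∀ i ∈ Icc 1 n, seqA i * seqA (n + 3 - i)
      = 4 * (seqA i * seqA (n + 2 - i)) - seqA i * seqA (n + 1 - i) := by
    intro i hi
    simp only [mem_Icc] at hi
    have e1 : n + 3 - i = (n + 1 - i) + 2 := by omega
    have e2 : n + 2 - i = (n + 1 - i) + 1 := by omega
    rw [e1, e2]
    have : seqA (n + 1 - i + 2) = 4 * seqA (n + 1 - i + 1) - seqA (n + 1 - i) := rfl
    rw [this]; ring
  rw [Finset.sum_congr rfl h1, Finset.sum_sub_distrib, ← Finset.mul_sum]
  have e3 : n + 3 - (n + 1) = 2 := by omega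
  have e4 : n + 3 - (n + 2) = 1 := by omega
  have e5 : n + 2 - (n + 1) = 1 := by omega
  rw [e3, e4, e5]
  have hA2 : seqA 2 = 3 := rfl
  have hA1 : seqA 1 = 1 := rfl
  rw [hA2, hA1]
  ring

theorem stmt_11 : ∀ n : ℕ, 1 ≤ n →
    2 * ∑ i ∈ Finset.Icc 1 n, seqA i * seqS (n + 1 - i)
      = (n : ℤ) * seqS n + ∑ i ∈ Finset.Icc 1 n, seqA i * seqA (n + 1 - i) := by
  suffices h : ∀ m : ℕ,
      2 * ∑ i ∈ Finset.Icc 1 (m + 1), seqA i * seqS (m + 2 - i)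
        = ((m : ℤ) + 1) * seqS (m + 1)
          + ∑ i ∈ Finset.Icc 1 (m + 1), seqA i * seqA (m + 2 - i) by
    intro n hn
    obtain ⟨m, rfl⟩ := Nat.exists_eq_add_of_le hn
    have hm := h m
    have e : 1 + m = m + 1 := by omega
    rw [e]
    convert hm using 3
    exact Nat.cast_succ m
  intro m
  induction m using Nat.twoStepInduction with
  | zero => decide
  | one => decide
  | more n ih1 ih2 =>
    have hS := sum_recS (n + 1)
    have hA := sum_recA (n + 1)
    have hk1 := seqA_key (n + 2)
    have hk2 := seqA_key (n + 1)
    have hSrec : seqS (n + 3) = 4 * seqS (n + 2) - seqS (n + 1) := rfl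
    show 2 * ∑ i ∈ Finset.Icc 1 (n + 3), seqA i * seqS (n + 4 - i)
        = ((n : ℤ) + 2 + 1) * seqS (n + 3)
          + ∑ i ∈ Finset.Icc 1 (n + 3), seqA i * seqA (n + 4 - i)
    have e1 : (n + 1) + 2 = n + 3 := by omega
    have e2 : (n + 1) + 3 = n + 4 := by omega
    rw [e1, e2] at hS hA
    rw [hS, hA, hSrec]
    push_cast at ih1 ih2 ⊢
    linarith
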